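/- Let κ be a singular cardinal of cofinality ω and let ⟨κ_n : n < ω⟩ be a strictly increasing sequence of regular cardinals with supremum κ. Then there exists a sequence ⟨f_α : α < κ⁺⟩ of functions in the product ∏_{n<ω}(κ_{n+1} \ κ_n) that is increasing mod finite: whenever α < β < κ⁺, we have f_α(n) < f_β(n) for all sufficiently large n. -/

import Mathlib

open Ordinal Cardinal

noncomputable def scaleEmb (κ : Cardinal.{0}) (α : Ordinal.{0}) (h : α.card ≤ κ) :
    α.ToType ↪ κ.ord.ToType :=
  Classical.choice ((Cardinal.le_def _ _).mp
    (by rwa [Cardinal.mk_toType, Cardinal.mk_toType, Cardinal.card_ord]))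

noncomputable def scaleRk (κ : Cardinal.{0}) (α : Ordinal.{0}) (h : α.card ≤ κ)
    (x : α.ToType) : Ordinal.{0} :=
  (((@Ordinal.ToType.mk κ.ord)).symm (scaleEmb κ α h x)).1

theorem scaleRk_lt (κ : Cardinal.{0}) (α : Ordinal.{0}) (h : α.card ≤ κ) (x : α.ToType) :
    scaleRk κ α h x < κ.ord :=
  (((@Ordinal.ToType.mk κ.ord)).symm (scaleEmb κ α h x)).2

theorem scaleRk_inj (κ : Cardinal.{0}) (α : Ordinal.{0}) (h : α.card ≤ κ) :
    Function.Injective (scaleRk κ α h) := by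
  intro x y hxy
  have : ((@Ordinal.ToType.mk κ.ord)).symm (scaleEmb κ α h x)
      = ((@Ordinal.ToType.mk κ.ord)).symm (scaleEmb κ α h y) := Subtype.ext hxy
  exact (scaleEmb κ α h).injective (((@Ordinal.ToType.mk κ.ord)).symm.injective this)

noncomputable def scaleF (κ : Cardinal.{0}) (κn : ℕ → Cardinal.{0}) :
    Ordinal.{0} → ℕ → Ordinal.{0}
  | α =>
    if h : α.card ≤ κ then fun n =>
      max (κn n).ord
        (⨆ x : {x : α.ToType // scaleRk κ α h x < (κn n).ord},
          scaleF κ κn (((@Ordinal.ToType.mk α)).symm x.1).1 n + 1)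
    else fun _ => 0
  termination_by α => α
  decreasing_by exact (((@Ordinal.ToType.mk α)).symm x.1).2

theorem scaleF_eq (κ : Cardinal.{0}) (κn : ℕ → Cardinal.{0}) (α : Ordinal.{0})
    (h : α.card ≤ κ) :
    scaleF κ κn α = fun n =>
      max (κn n).ord
        (⨆ x : {x : α.ToType // scaleRk κ α h x < (κn n).ord},
          scaleF κ κn (((@Ordinal.ToType.mk α)).symm x.1).1 n + 1) := by
  rw [scaleF, dif_pos h]

theorem scaleF_bounds (κ : Cardinal.{0}) (κn : ℕ → Cardinal.{0})
    (hreg : ∀ n, (κn n).IsRegular) (hmono : StrictMono κn) :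
    ∀ α : Ordinal.{0}, α.card ≤ κ → ∀ n : ℕ,
      (κn n).ord ≤ scaleF κ κn α n ∧ scaleF κ κn α n < (κn (n + 1)).ord := by
  intro α
  induction α using Ordinal.induction with
  | h α IH =>
    intro h n
    rw [scaleF_eq κ κn α h]
    constructor
    · exact le_max_left _ _
    · apply max_lt (Cardinal.ord_lt_ord.mpr (hmono (Nat.lt_succ_self n)))
      apply Cardinal.iSup_lt_ord_lift_of_isRegular (hreg (n + 1))
      · rw [Cardinal.lift_id]
        have emb : {x : α.ToType // scaleRk κ α h x < (κn n).ord} ↪ ((κn n).ord).ToType :=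
          ⟨fun x => (@Ordinal.ToType.mk ((κn n).ord)) ⟨scaleRk κ α h x.1, x.2⟩, by
            intro x y hxy
            have h2 := ((@Ordinal.ToType.mk ((κn n).ord))).injective hxy
            have h3 := congrArg Subtype.val h2
            exact Subtype.ext (scaleRk_inj κ α h h3)⟩
        calc #{x : α.ToType // scaleRk κ α h x < (κn n).ord}
            ≤ #((κn n).ord).ToType := Cardinal.mk_le_of_injective emb.injective
          _ = κn n := by rw [Cardinal.mk_toType, Cardinal.card_ord]
          _ < κn (n + 1) := hmono (Nat.lt_succ_self n)
      · intro x
        have hb : ((((@Ordinal.ToType.mk α)).symm x.1).1 : Ordinal) < α :=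
          (((@Ordinal.ToType.mk α)).symm x.1).2
        have hc : ((((@Ordinal.ToType.mk α)).symm x.1).1 : Ordinal).card ≤ κ :=
          le_trans (Ordinal.card_le_card hb.le) h
        have := (IH _ hb hc n).2
        have hlim : Order.IsSuccLimit ((κn (n + 1)).ord) := Cardinal.isSuccLimit_ord (hreg (n + 1)).aleph0_le
        rw [Ordinal.add_one_eq_succ]
        exact hlim.succ_lt this

theorem scaleF_mono (κ : Cardinal.{0}) (κn : ℕ → Cardinal.{0})
    (hsup : (⨆ n, κn n) = κ) (hmono : StrictMono κn)
    (α β : Ordinal.{0}) (hab : α < β) (h : β.card ≤ κ) :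
    ∃ N : ℕ, ∀ n ≥ N, scaleF κ κn α n < scaleF κ κn β n := by
  set x₀ : β.ToType := (@Ordinal.ToType.mk β) ⟨α, hab⟩ with hx₀
  have hr : scaleRk κ β h x₀ < κ.ord := scaleRk_lt κ β h x₀
  have hr' : (scaleRk κ β h x₀).card < ⨆ n, κn n := by
    rw [hsup]; exact Cardinal.lt_ord.mp hr
  obtain ⟨N, hN⟩ := exists_lt_of_lt_ciSup hr'
  refine ⟨N, fun n hn => ?_⟩
  have hrn : scaleRk κ β h x₀ < (κn n).ord :=
    Cardinal.lt_ord.mpr (hN.trans_le (hmono.monotone hn))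
  rw [scaleF_eq κ κn β h]
  apply lt_of_lt_of_le _ (le_max_right _ _)
  have key : scaleF κ κn α n + 1 ≤
      ⨆ x : {x : β.ToType // scaleRk κ β h x < (κn n).ord},
        scaleF κ κn (((@Ordinal.ToType.mk β)).symm x.1).1 n + 1 := by
    have := Ordinal.le_iSup
      (fun x : {x : β.ToType // scaleRk κ β h x < (κn n).ord} =>
        scaleF κ κn (((@Ordinal.ToType.mk β)).symm x.1).1 n + 1) ⟨x₀, hrn⟩
    simpa [hx₀] using this
  exact lt_of_lt_of_le (lt_add_one _) key


/-- Let `κ` be a singular cardinal of cofinality `ω` and let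
`⟨κ_n : n < ω⟩` be a strictly increasing sequence of regular cardinals with
supremum `κ`. Then there exists a sequence `⟨f_α : α < κ⁺⟩` of functions in the
product `∏_{n<ω} (κ_{n+1} \ κ_n)` that is increasing mod finite: whenever
`α < β < κ⁺`, we have `f_α n < f_β n` for all sufficiently large `n`. -/
theorem exists_increasing_mod_finite_sequence
    (κ : Cardinal.{0}) (hκ : Cardinal.aleph0 < κ)
    (hcof : (κ.ord).cof = Cardinal.aleph0)
    (κn : ℕ → Cardinal.{0})
    (hreg : ∀ n, (κn n).IsRegular)
    (hmono : StrictMono κn)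
    (hsup : (⨆ n, κn n) = κ) :
    ∃ f : Ordinal.{0} → (ℕ → Ordinal.{0}),
      (∀ α < (Order.succ κ).ord, ∀ n : ℕ,
        (κn n).ord ≤ f α n ∧ f α n < (κn (n + 1)).ord) ∧
      (∀ α β : Ordinal.{0}, α < β → β < (Order.succ κ).ord →
        ∃ N : ℕ, ∀ n ≥ N, f α n < f β n) := by
  refine ⟨scaleF κ κn, ?_, ?_⟩
  · intro α hα n
    have h : α.card ≤ κ := by
      have := Cardinal.lt_ord.mp hα
      exact Order.lt_succ_iff.mp this
    exact scaleF_bounds κ κn hreg hmono α h n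
  · intro α β hab hβ
    have h : β.card ≤ κ := Order.lt_succ_iff.mp (Cardinal.lt_ord.mp hβ)
    exact scaleF_mono κ κn hsup hmono α β hab h
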